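/- Let Q_1,…,Q_r ∈ ℂ[x_1,…,x_r] be algebraically independent polynomials such that ℂ[x_1,…,x_r] is a free module of finite rank N over the ℂ-subalgebra generated by Q_1,…,Q_r. Let G be a finite group of linear automorphisms of ℂ^r such that each Q_i is G-invariant, i.e. Q_i(g·x) = Q_i(x) as polynomials for every g ∈ G, and suppose N = |G|·d. Let a ∈ ℂ^r be such that the Jacobian determinant det[∂Q_i/∂x_j] is nonzero at every point of the fiber F = {b ∈ ℂ^r : Q_i(b) = a_i for all i}. Then F contains d points b_1,…,b_d lying in pairwise distinct G-orbits. -/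

import Mathlib

open MvPolynomial

lemma aux_subC {r : ℕ} (b : Fin r → ℂ) (p : MvPolynomial (Fin r) ℂ) :
    p - C (eval b p) ∈ Ideal.span (Set.range fun j : Fin r => X j - C (b j)) := by
  induction p using MvPolynomial.induction_on with
  | C s => simp
  | add p q hp hq =>
      have := Ideal.add_mem _ hp hq
      simpa [add_sub_add_comm] using this
  | mul_X p i hp =>
      have h1 : p * X i - C (eval b (p * X i))
          = (p - C (eval b p)) * X i + C (eval b p) * (X i - C (b i)) := by
        simp only [eval_mul, eval_X]
        rw [map_mul]; ring
      rw [h1]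
      exact Ideal.add_mem _ (Ideal.mul_mem_right _ _ hp)
        (Ideal.mul_mem_left _ _ (Ideal.subset_span ⟨i, rfl⟩))

lemma aux_eval_zero {r : ℕ} (b : Fin r → ℂ) {p : MvPolynomial (Fin r) ℂ}
    (hp : p ∈ Ideal.span (Set.range fun j : Fin r => X j - C (b j))) :
    eval b p = 0 := by
  have : Ideal.span (Set.range fun j : Fin r => X j - C (b j)) ≤
      RingHom.ker (eval b) := by
    rw [Ideal.span_le]
    rintro _ ⟨j, rfl⟩
    simp [RingHom.mem_ker]
  exact this hp

lemma aux_mem_iff {r : ℕ} (b : Fin r → ℂ) (p : MvPolynomial (Fin r) ℂ) :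
    p ∈ Ideal.span (Set.range fun j : Fin r => X j - C (b j)) ↔ eval b p = 0 := by
  constructor
  · exact aux_eval_zero b
  · intro h
    have := aux_subC b p
    rwa [h, map_zero, sub_zero] at this

lemma aux_aeval_eq_eval {r : ℕ} (b : Fin r → ℂ) (p : MvPolynomial (Fin r) ℂ) :
    aeval b p = eval b p := by
  rw [← coe_aeval_eq_eval]; rfl

lemma aux_taylor {r : ℕ} (b : Fin r → ℂ) (p : MvPolynomial (Fin r) ℂ) :
    p - C (eval b p) - ∑ j, C (eval b (pderiv j p)) * (X j - C (b j))
      ∈ (Ideal.span (Set.range fun j : Fin r => X j - C (b j))) ^ 2 := by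
  set m := Ideal.span (Set.range fun j : Fin r => X j - C (b j)) with hm
  induction p using MvPolynomial.induction_on with
  | C s => simp
  | add p q hp hq =>
      have := Ideal.add_mem _ hp hq
      have heq : p + q - C (eval b (p + q)) - ∑ j, C (eval b (pderiv j (p + q))) * (X j - C (b j))
          = (p - C (eval b p) - ∑ j, C (eval b (pderiv j p)) * (X j - C (b j)))
            + (q - C (eval b q) - ∑ j, C (eval b (pderiv j q)) * (X j - C (b j))) := by
        simp only [map_add, add_mul, Finset.sum_add_distrib]
        ring
      rw [heq]; exact this
  | mul_X p i hp =>
      have h1 : ∀ j, C (eval b (pderiv j (p * X i))) * (X j - C (b j))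
          = C (b i) * (C (eval b (pderiv j p)) * (X j - C (b j)))
            + (if j = i then C (eval b p) * (X i - C (b i)) else 0) := by
        intro j
        rcases eq_or_ne j i with rfl | h
        · rw [if_pos rfl, pderiv_mul, pderiv_X_self, mul_one, map_add, map_add, map_mul, eval_X,
            map_mul]
          ring
        · rw [if_neg h, pderiv_mul, pderiv_X_of_ne (Ne.symm h), mul_zero, add_zero, map_mul,
            eval_X, map_mul]
          ring
      have hsum : ∑ j, C (eval b (pderiv j (p * X i))) * (X j - C (b j))
          = C (b i) * (∑ j, C (eval b (pderiv j p)) * (X j - C (b j)))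
            + C (eval b p) * (X i - C (b i)) := by
        rw [Finset.sum_congr rfl fun j _ => h1 j, Finset.sum_add_distrib, ← Finset.mul_sum,
          Finset.sum_ite_eq' Finset.univ i fun _ => C (eval b p) * (X i - C (b i))]
        simp
      have heq : p * X i - C (eval b (p * X i))
            - ∑ j, C (eval b (pderiv j (p * X i))) * (X j - C (b j))
          = C (b i) * (p - C (eval b p) - ∑ j, C (eval b (pderiv j p)) * (X j - C (b j)))
            + (p - C (eval b p)) * (X i - C (b i)) := by
        rw [hsum, eval_mul, eval_X, map_mul]
        ring
      rw [heq]
      refine Ideal.add_mem _ (Ideal.mul_mem_left _ _ hp) ?_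
      rw [pow_two]
      exact Ideal.mul_mem_mul (aux_subC b p) (Ideal.subset_span ⟨i, rfl⟩)

lemma aux_jac {r : ℕ} (Q : Fin r → MvPolynomial (Fin r) ℂ) (a b : Fin r → ℂ)
    (hb : ∀ i, eval b (Q i) = a i)
    (hdet : (Matrix.of fun i j : Fin r => eval b (pderiv j (Q i))).det ≠ 0) :
    Ideal.span (Set.range fun j : Fin r => X j - C (b j)) ≤
      Ideal.span (Set.range fun i => Q i - C (a i)) ⊔
        (Ideal.span (Set.range fun j : Fin r => X j - C (b j))) ^ 2 := by
  set m := Ideal.span (Set.range fun j : Fin r => X j - C (b j)) with hm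
  set I := Ideal.span (Set.range fun i => Q i - C (a i)) with hI
  set Jm : Matrix (Fin r) (Fin r) ℂ := Matrix.of fun i j => eval b (pderiv j (Q i)) with hJm
  set K := Jm⁻¹ with hKdef
  have hK : K * Jm = 1 := Matrix.nonsing_inv_mul _ (isUnit_iff_ne_zero.mpr hdet)
  set u : Fin r → MvPolynomial (Fin r) ℂ :=
    fun i => Q i - C (a i) - ∑ l, C (Jm i l) * (X l - C (b l)) with hu
  have hum : ∀ i, u i ∈ m ^ 2 := by
    intro i
    have := aux_taylor b (Q i)
    rw [hb i] at this
    exact this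
  have key : ∀ j, X j - C (b j) = ∑ i, C (K j i) * ((Q i - C (a i)) - u i) := by
    intro j
    have h1 : ∀ i, (Q i - C (a i)) - u i = ∑ l, C (Jm i l) * (X l - C (b l)) := by
      intro i; rw [hu]; ring
    have : ∑ i, C (K j i) * ((Q i - C (a i)) - u i)
        = ∑ l, C ((K * Jm) j l) * (X l - C (b l)) := by
      calc ∑ i, C (K j i) * ((Q i - C (a i)) - u i)
          = ∑ i, ∑ l, C (K j i * Jm i l) * (X l - C (b l)) := by
            refine Finset.sum_congr rfl fun i _ => ?_
            rw [h1 i, Finset.mul_sum]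
            exact Finset.sum_congr rfl fun l _ => by rw [map_mul]; ring
        _ = ∑ l, C ((K * Jm) j l) * (X l - C (b l)) := by
            rw [Finset.sum_comm]
            refine Finset.sum_congr rfl fun l _ => ?_
            rw [Matrix.mul_apply, map_sum, Finset.sum_mul]
    rw [this, hK]
    simp [Matrix.one_apply, apply_ite (C : ℂ → MvPolynomial (Fin r) ℂ), ite_mul]
  rw [hm, Ideal.span_le]
  rintro _ ⟨j, rfl⟩
  show X j - C (b j) ∈ _
  rw [key j]
  refine Ideal.sum_mem _ fun i _ => Ideal.mul_mem_left _ _ (Submodule.sub_mem _ ?_ ?_)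
  · exact Ideal.mem_sup_left (Ideal.subset_span ⟨i, rfl⟩)
  · exact Ideal.mem_sup_right (hum i)

lemma aux_le_prod {R : Type*} [CommRing R] {ι : Type*} {f : ι → Ideal R} {K : Ideal R}
    (s : Finset ι) (hco : ∀ i ∈ s, ∀ j ∈ s, i ≠ j → f i ⊔ f j = ⊤)
    (hle : ∀ i ∈ s, K ≤ f i) : K ≤ ∏ i ∈ s, f i := by
  classical
  induction s using Finset.induction_on with
  | empty => simp [Ideal.one_eq_top]
  | insert a s' ha ih =>
      rw [Finset.prod_insert ha]
      have hco' : IsCoprime (f a) (∏ i ∈ s', f i) := by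
        refine IsCoprime.prod_right fun i hi => ?_
        rw [Ideal.isCoprime_iff_sup_eq]
        exact hco a (Finset.mem_insert_self _ _) i (Finset.mem_insert_of_mem hi)
          (fun h => ha (h ▸ hi))
      have hinf : K ≤ f a ⊓ ∏ i ∈ s', f i :=
        le_inf (hle a (Finset.mem_insert_self _ _))
          (ih (fun i hi j hj hij => hco i (Finset.mem_insert_of_mem hi) j
            (Finset.mem_insert_of_mem hj) hij)
            (fun i hi => hle i (Finset.mem_insert_of_mem hi)))
      rwa [Ideal.inf_eq_mul_of_isCoprime hco'] at hinf

set_option maxHeartbeats 2000000 in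
set_option synthInstance.maxHeartbeats 1000000 in
/-- Let `Q₁,…,Q_r` be algebraically independent with `ℂ[x₁,…,x_r]` free of rank
`N = |G|·d` over the subalgebra they generate, where `G` is a finite group of
linear automorphisms of `ℂ^r` leaving each `Q i` invariant as a polynomial
(`Q_i(g·x) = Q_i(x)`).  If the Jacobian determinant `det [∂Q_i/∂x_j]` is nonzero
at every point of the fiber `F = {b : Q_i(b) = a_i for all i}`, then `F`
contains `d` points lying in pairwise distinct `G`-orbits. -/
theorem stmt13 {r : ℕ} (Q : Fin r → MvPolynomial (Fin r) ℂ)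
    (hQ : AlgebraicIndependent ℂ Q)
    (G : Subgroup ((Fin r → ℂ) ≃ₗ[ℂ] (Fin r → ℂ))) [Finite G]
    (hGinv : ∀ g ∈ G, ∀ i,
      aeval (fun j => ∑ k, C (g (Pi.single k 1) j) * X k) (Q i) = Q i)
    (d N : ℕ) (hN : N = Nat.card G * d)
    (B : Module.Basis (Fin N) (Algebra.adjoin ℂ (Set.range Q)) (MvPolynomial (Fin r) ℂ))
    (a : Fin r → ℂ)
    (hJ : ∀ b ∈ {b : Fin r → ℂ | ∀ i, eval b (Q i) = a i},
      eval b (Matrix.of fun i j : Fin r => pderiv j (Q i)).det ≠ 0) :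
    ∃ b : Fin d → (Fin r → ℂ),
      (∀ i, ∀ j, eval (b i) (Q j) = a j) ∧
      Pairwise fun i j => ∀ g ∈ G, g (b i) ≠ b j := by
  classical
  set F : Set (Fin r → ℂ) := {b : Fin r → ℂ | ∀ i, eval b (Q i) = a i} with hFdef
  set I : Ideal (MvPolynomial (Fin r) ℂ) := Ideal.span (Set.range fun i => Q i - C (a i))
    with hIdef
  set A := Algebra.adjoin ℂ (Set.range Q) with hAdef
  -- the character χ : A → ℂ sending Q i to a i
  set χ : A →ₐ[ℂ] ℂ := (aeval a).comp hQ.aevalEquiv.symm.toAlgHom with hχdef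
  have hKp : ∀ p : MvPolynomial (Fin r) ℂ, aeval Q p - C (aeval a p) ∈ I := by
    intro p
    induction p using MvPolynomial.induction_on with
    | C s => simp [MvPolynomial.algebraMap_eq]
    | add p q hp hq =>
        have := Ideal.add_mem _ hp hq
        simpa [add_sub_add_comm] using this
    | mul_X p i hp =>
        have h1 : aeval Q (p * X i) - C (aeval a (p * X i))
            = (aeval Q p - C (aeval a p)) * Q i + C (aeval a p) * (Q i - C (a i)) := by
          rw [map_mul, map_mul, aeval_X, aeval_X, map_mul]
          ring
        rw [h1]
        exact Ideal.add_mem _ (Ideal.mul_mem_right _ _ hp)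
          (Ideal.mul_mem_left _ _ (Ideal.subset_span ⟨i, rfl⟩))
  have hχI : ∀ c : A, (c : MvPolynomial (Fin r) ℂ) - C (χ c) ∈ I := by
    intro c
    have h1 : (c : MvPolynomial (Fin r) ℂ) = aeval Q (hQ.aevalEquiv.symm c) := by
      have h0 := hQ.algebraMap_aevalEquiv (hQ.aevalEquiv.symm c)
      rw [AlgEquiv.apply_symm_apply] at h0
      exact (show (c : MvPolynomial (Fin r) ℂ)
        = algebraMap A (MvPolynomial (Fin r) ℂ) c from rfl).trans h0
    have h2 : χ c = aeval a (hQ.aevalEquiv.symm c) := rfl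
    rw [h1, h2]
    exact hKp _
  have hQmem : ∀ i, Q i - C (a i) ∈ A := by
    intro i
    refine A.sub_mem (Algebra.subset_adjoin ⟨i, rfl⟩) ?_
    have := A.algebraMap_mem (a i)
    rwa [MvPolynomial.algebraMap_eq] at this
  set s : Fin r → A := fun i => ⟨Q i - C (a i), hQmem i⟩ with hsdef
  have hχs : ∀ i, χ (s i) = 0 := by
    intro i
    have e1 : hQ.aevalEquiv (X i - C (a i)) = s i := by
      apply Subtype.ext
      have e0 : ((hQ.aevalEquiv (X i - C (a i)) : A) : MvPolynomial (Fin r) ℂ)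
          = aeval Q (X i - C (a i)) := hQ.algebraMap_aevalEquiv _
      rw [e0, map_sub, aeval_X, aeval_C, MvPolynomial.algebraMap_eq]
    have e2 : hQ.aevalEquiv.symm (s i) = X i - C (a i) := by
      rw [← e1, AlgEquiv.symm_apply_apply]
    have e3 : χ (s i) = aeval a (hQ.aevalEquiv.symm (s i)) := rfl
    rw [e3, e2, map_sub, aeval_X, aeval_C]
    simp
  -- the images of B form a ℂ-basis of the quotient
  set mkq := Ideal.Quotient.mkₐ ℂ I with hmkq
  set v : Fin N → (MvPolynomial (Fin r) ℂ ⧸ I) := fun k => mkq (B k) with hvdef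
  have hcoe : ∀ (c : A) (p : MvPolynomial (Fin r) ℂ), c • p = (c : MvPolynomial (Fin r) ℂ) * p :=
    fun c p => by
      rw [Algebra.smul_def]
      rfl
  have hli : LinearIndependent ℂ v := by
    rw [Fintype.linearIndependent_iff]
    intro l hl
    set q : MvPolynomial (Fin r) ℂ := ∑ k, l k • (B k : MvPolynomial (Fin r) ℂ) with hqdef
    have hq0 : mkq q = 0 := by
      rw [hqdef, map_sum]
      simpa using hl
    have hqI : q ∈ I := by
      rwa [hmkq, Ideal.Quotient.mkₐ_eq_mk, Ideal.Quotient.eq_zero_iff_mem] at hq0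
    obtain ⟨c, hc⟩ := Ideal.mem_span_range_iff_exists_fun.mp (hIdef ▸ hqI)
    intro k
    have hrep1 : χ (B.repr q k) = 0 := by
      rw [← hc]
      have : (∑ i, c i * (Q i - C (a i))) = ∑ i, s i • c i := by
        refine Finset.sum_congr rfl fun i _ => ?_
        rw [hcoe, mul_comm]
      rw [this, map_sum]
      rw [Finsupp.finset_sum_apply]
      rw [map_sum]
      refine Finset.sum_eq_zero fun i _ => ?_
      rw [map_smul, Finsupp.smul_apply, smul_eq_mul, map_mul, hχs i, zero_mul]
    have hrep2 : B.repr q k = algebraMap ℂ A (l k) := by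
      have hq2 : q = ∑ k', algebraMap ℂ A (l k') • (B k' : MvPolynomial (Fin r) ℂ) := by
        refine Finset.sum_congr rfl fun k' _ => ?_
        rw [algebraMap_smul]
      rw [hq2, map_sum, Finsupp.finset_sum_apply]
      rw [Finset.sum_eq_single k]
      · rw [map_smul, Module.Basis.repr_self, Finsupp.smul_apply, Finsupp.single_eq_same, smul_eq_mul,
          mul_one]
      · intro k' _ hk'
        rw [map_smul, Module.Basis.repr_self, Finsupp.smul_apply, Finsupp.single_eq_of_ne hk'.symm,
          smul_eq_mul, mul_zero]
      · intro h
        exact absurd (Finset.mem_univ k) h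
    rw [hrep2] at hrep1
    rw [AlgHom.commutes] at hrep1
    exact hrep1
  have hsp : ∀ x : MvPolynomial (Fin r) ℂ ⧸ I, x ∈ Submodule.span ℂ (Set.range v) := by
    intro x
    obtain ⟨p, rfl⟩ := Ideal.Quotient.mkₐ_surjective ℂ I x
    have hps : mkq p = ∑ k, χ (B.repr p k) • v k := by
      conv_lhs => rw [← B.sum_repr p]
      rw [map_sum]
      refine Finset.sum_congr rfl fun k _ => ?_
      rw [hcoe, map_mul]
      have h3 : mkq ((B.repr p k : MvPolynomial (Fin r) ℂ))
          = mkq (C (χ (B.repr p k))) := by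
        rw [hmkq, Ideal.Quotient.mkₐ_eq_mk, Ideal.Quotient.mk_eq_mk_iff_sub_mem]
        exact hχI _
      rw [h3, ← MvPolynomial.algebraMap_eq, AlgHom.commutes, ← Algebra.smul_def]
    rw [hps]
    exact Submodule.sum_mem _ fun k _ =>
      Submodule.smul_mem _ _ (Submodule.subset_span ⟨k, rfl⟩)
  set basisR : Module.Basis (Fin N) ℂ (MvPolynomial (Fin r) ℂ ⧸ I) :=
    Module.Basis.mk hli (fun x _ => hsp x) with hbasisR
  have hfinrank : Module.finrank ℂ (MvPolynomial (Fin r) ℂ ⧸ I) = N := by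
    rw [Module.finrank_eq_card_basis basisR, Fintype.card_fin]
  haveI : Module.Finite ℂ (MvPolynomial (Fin r) ℂ ⧸ I) := Module.Finite.of_basis basisR
  -- evaluation maps on the quotient at points of the fiber
  have hIev : ∀ b : F, ∀ p ∈ I, aeval (b : Fin r → ℂ) p = 0 := by
    intro b p hp
    have hle : I ≤ RingHom.ker (aeval (R := ℂ) (S₁ := ℂ) (b : Fin r → ℂ)).toRingHom := by
      rw [hIdef, Ideal.span_le]
      rintro _ ⟨i, rfl⟩
      have hb : ∀ i, eval (b : Fin r → ℂ) (Q i) = a i := b.2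
      simp [SetLike.mem_coe, RingHom.mem_ker, aux_aeval_eq_eval, hb i]
    exact hle hp
  set evb : F → ((MvPolynomial (Fin r) ℂ ⧸ I) →ₐ[ℂ] ℂ) :=
    fun b => Ideal.Quotient.liftₐ I (aeval (b : Fin r → ℂ)) (hIev b) with hevb
  have hevb_mk : ∀ (b : F) (p : MvPolynomial (Fin r) ℂ),
      evb b (mkq p) = eval (b : Fin r → ℂ) p := by
    intro b p
    rw [hevb, hmkq, Ideal.Quotient.mkₐ_eq_mk, Ideal.Quotient.liftₐ_apply]
    exact (Ideal.Quotient.lift_mk _ _ _).trans (aux_aeval_eq_eval _ _)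
  haveI hFfin : Finite F := by
    set hom : F → ((MvPolynomial (Fin r) ℂ ⧸ I) →* ℂ) :=
      fun b => ((evb b : (MvPolynomial (Fin r) ℂ ⧸ I) →+* ℂ) :
        (MvPolynomial (Fin r) ℂ ⧸ I) →* ℂ) with hhom
    have hinj : Function.Injective hom := by
      intro b b' h
      apply Subtype.ext; funext j
      have h1 := DFunLike.congr_fun h (mkq (X j))
      have h2 : ∀ b : F, hom b (mkq (X j)) = (b : Fin r → ℂ) j := by
        intro b
        have h3 : hom b (mkq (X j)) = evb b (mkq (X j)) := rfl
        rw [h3, hevb_mk b (X j), eval_X]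
      rw [h2 b, h2 b'] at h1; exact h1
    have hli2 := (linearIndependent_monoidHom (MvPolynomial (Fin r) ℂ ⧸ I) ℂ).comp hom hinj
    set Φ : ((MvPolynomial (Fin r) ℂ ⧸ I) →ₗ[ℂ] ℂ) →ₗ[ℂ] ((MvPolynomial (Fin r) ℂ ⧸ I) → ℂ) :=
      { toFun := fun f => ⇑f, map_add' := fun f g => rfl, map_smul' := fun c f => rfl } with hPhi
    have hli3 : LinearIndependent ℂ (fun b : F => (evb b).toLinearMap) := by
      apply LinearIndependent.of_comp Φ
      exact hli2
    exact hli3.finite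
  haveI : Fintype F := Fintype.ofFinite _
  -- maximal ideals at points of the fiber
  set mb : (Fin r → ℂ) → Ideal (MvPolynomial (Fin r) ℂ) :=
    fun b => Ideal.span (Set.range fun j => X j - C (b j)) with hmb
  have hImb : ∀ b : F, I ≤ mb (b : Fin r → ℂ) := by
    intro b p hp
    rw [hmb, aux_mem_iff, ← aux_aeval_eq_eval]
    exact hIev b p hp
  have hmbsup : ∀ b : F, mb (b : Fin r → ℂ) = I ⊔ (mb (b : Fin r → ℂ)) ^ 2 := by
    intro b
    refine le_antisymm ?_ (sup_le (hImb b) (by rw [pow_two]; exact Ideal.mul_le_left))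
    have hdet : (Matrix.of fun i j : Fin r =>
        eval (b : Fin r → ℂ) (pderiv j (Q i))).det ≠ 0 := by
      have h1 := hJ (b : Fin r → ℂ) b.2
      have h2 : eval (b : Fin r → ℂ) (Matrix.of fun i j : Fin r => pderiv j (Q i)).det
          = (Matrix.of fun i j : Fin r => eval (b : Fin r → ℂ) (pderiv j (Q i))).det := by
        rw [RingHom.map_det]
        rfl
      rwa [h2] at h1
    exact aux_jac Q a (b : Fin r → ℂ) b.2 hdet
  set Mb : F → Ideal (MvPolynomial (Fin r) ℂ ⧸ I) :=
    fun b => (mb (b : Fin r → ℂ)).map (Ideal.Quotient.mk I) with hMbdef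
  have hMb2 : ∀ b : F, Mb b = (Mb b) ^ 2 := by
    intro b
    calc Mb b = (I ⊔ (mb (b : Fin r → ℂ)) ^ 2).map (Ideal.Quotient.mk I) := by
          rw [hMbdef, ← hmbsup b]
      _ = (Mb b) ^ 2 := by
          rw [Ideal.map_sup, Ideal.map_quotient_self, Ideal.map_pow, bot_sup_eq]
  have hpairMb : ∀ b b' : F, b ≠ b' → Mb b ⊔ Mb b' = ⊤ := by
    intro b b' hne
    have hup : mb (b : Fin r → ℂ) ⊔ mb (b' : Fin r → ℂ) = ⊤ := by
      obtain ⟨j, hj⟩ : ∃ j, (b : Fin r → ℂ) j ≠ (b' : Fin r → ℂ) j := by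
        by_contra h
        push_neg at h
        exact hne (Subtype.ext (funext h))
      rw [Ideal.eq_top_iff_one]
      have h1 : (X j - C ((b : Fin r → ℂ) j)) - (X j - C ((b' : Fin r → ℂ) j))
          ∈ mb (b : Fin r → ℂ) ⊔ mb (b' : Fin r → ℂ) :=
        Submodule.sub_mem _ (Ideal.mem_sup_left (Ideal.subset_span ⟨j, rfl⟩))
          (Ideal.mem_sup_right (Ideal.subset_span ⟨j, rfl⟩))
      have h2 : (X j - C ((b : Fin r → ℂ) j)) - (X j - C ((b' : Fin r → ℂ) j))
          = C ((b' : Fin r → ℂ) j - (b : Fin r → ℂ) j) := by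
        rw [map_sub]; ring
      have h3 : (1 : MvPolynomial (Fin r) ℂ)
          = C (((b' : Fin r → ℂ) j - (b : Fin r → ℂ) j)⁻¹)
            * C ((b' : Fin r → ℂ) j - (b : Fin r → ℂ) j) := by
        rw [← map_mul, inv_mul_cancel₀ (sub_ne_zero.mpr (Ne.symm hj)), map_one]
      rw [h3]
      exact Ideal.mul_mem_left _ _ (h2 ▸ h1)
    rw [hMbdef, ← Ideal.map_sup, hup, Ideal.map_top]
  haveI : IsNoetherianRing (MvPolynomial (Fin r) ℂ ⧸ I) :=
    isNoetherianRing_iff.mpr (isNoetherian_of_tower ℂ inferInstance)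
  have hcrux : ∀ p : MvPolynomial (Fin r) ℂ,
      (∀ b : F, eval (b : Fin r → ℂ) p = 0) → p ∈ I := by
    intro p hp
    have hpmb : ∀ b : F, p ∈ mb (b : Fin r → ℂ) := fun b => by
      rw [hmb, aux_mem_iff]; exact hp b
    have h1 : Ideal.Quotient.mk I p ∈ ∏ b : F, Mb b := by
      have hKle : Ideal.span {Ideal.Quotient.mk I p} ≤ ∏ b ∈ Finset.univ, Mb b := by
        refine aux_le_prod Finset.univ (fun b _ b' _ hne => hpairMb b b' hne) ?_
        intro b _
        rw [Ideal.span_le, Set.singleton_subset_iff]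
        exact Ideal.mem_map_of_mem _ (hpmb b)
      exact hKle (Ideal.subset_span rfl)
    have hnil : (∏ b : F, Mb b) ≤ nilradical (MvPolynomial (Fin r) ℂ ⧸ I) := by
      intro x hx
      obtain ⟨q, rfl⟩ := Ideal.Quotient.mk_surjective x
      have hq : ∀ b : F, q ∈ mb (b : Fin r → ℂ) := by
        intro b
        have hxb : Ideal.Quotient.mk I q ∈ Mb b :=
          (Ideal.prod_le_inf.trans (Finset.inf_le (Finset.mem_univ b))) hx
        exact (Ideal.mem_quotient_iff_mem (hImb b)).mp hxb
      have hrad : q ∈ I.radical := by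
        rw [← MvPolynomial.vanishingIdeal_zeroLocus_eq_radical (K := ℂ),
          MvPolynomial.mem_vanishingIdeal_iff]
        intro x hx'
        have hxF : x ∈ F := by
          rw [hFdef]
          intro i
          have h5 := hx' (Q i - C (a i)) (Ideal.subset_span ⟨i, rfl⟩)
          rw [map_sub, aeval_C, Algebra.algebraMap_self, RingHom.id_apply, aux_aeval_eq_eval] at h5
          exact sub_eq_zero.mp h5
        exact aux_eval_zero _ (hq ⟨x, hxF⟩)
      obtain ⟨n, hn⟩ := hrad
      refine ⟨n, ?_⟩
      have h9 : (Ideal.Quotient.mk I) (q ^ n) = 0 := Ideal.Quotient.eq_zero_iff_mem.mpr hn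
      rw [← map_pow, h9]
      exact Submodule.zero_mem _
    obtain ⟨k, hk⟩ := IsNoetherianRing.isNilpotent_nilradical (MvPolynomial (Fin r) ℂ ⧸ I)
    have hchain : ∀ k' : ℕ, (∏ b : F, Mb b) ≤ (∏ b : F, Mb b) ^ (k' + 1) := by
      intro k'
      induction k' with
      | zero => simp
      | succ k' ih =>
          have h2 : (∏ b : F, Mb b) = (∏ b : F, Mb b) ^ 2 := by
            conv_lhs => rw [Finset.prod_congr rfl (fun b _ => hMb2 b)]
            rw [Finset.prod_pow]
          calc (∏ b : F, Mb b) = (∏ b : F, Mb b) ^ 2 := h2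
            _ = (∏ b : F, Mb b) * (∏ b : F, Mb b) := by rw [pow_two]
            _ ≤ (∏ b : F, Mb b) ^ (k' + 1) * (∏ b : F, Mb b) := Ideal.mul_mono ih le_rfl
            _ = (∏ b : F, Mb b) ^ (k' + 1 + 1) := by exact (Submodule.pow_succ (M := ∏ b : F, Mb b)).symm
    have hbot : Ideal.Quotient.mk I p ∈ (⊥ : Ideal (MvPolynomial (Fin r) ℂ ⧸ I)) := by
      rcases k with _ | k
      · rw [pow_zero, Ideal.one_eq_top] at hk
        have h8 : (⊥ : Ideal (MvPolynomial (Fin r) ℂ ⧸ I)) = ⊤ := by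
          rw [← Ideal.zero_eq_bot, ← hk]
        rw [h8]
        trivial
      · have h6 := (hchain k).trans (Ideal.pow_right_mono hnil (k + 1))
        rw [hk] at h6
        exact h6 h1
    rw [← Ideal.Quotient.eq_zero_iff_mem]
    exact (Submodule.mem_bot _).mp hbot
  -- counting: N ≤ |F|
  have hNle : N ≤ Fintype.card F := by
    set ev : (MvPolynomial (Fin r) ℂ ⧸ I) →ₗ[ℂ] (F → ℂ) :=
      LinearMap.pi (fun b => (evb b).toLinearMap) with hev
    have hinj : Function.Injective ev := by
      rw [← LinearMap.ker_eq_bot, Submodule.eq_bot_iff]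
      intro x hx
      obtain ⟨p, rfl⟩ := Ideal.Quotient.mkₐ_surjective ℂ I x
      rw [LinearMap.mem_ker] at hx
      have hp : ∀ b : F, eval (b : Fin r → ℂ) p = 0 := by
        intro b
        have h7 := congrFun hx b
        rw [hev] at h7
        rw [LinearMap.pi_apply] at h7
        rw [AlgHom.toLinearMap_apply, hevb_mk b p] at h7
        exact h7
      have hpI : p ∈ I := hcrux p hp
      rw [Ideal.Quotient.mkₐ_eq_mk, Ideal.Quotient.eq_zero_iff_mem]
      exact hpI
    have hle := LinearMap.finrank_le_finrank_of_injective hinj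
    rwa [hfinrank, Module.finrank_fintype_fun_eq_card] at hle
  -- the G-action preserves the fiber
  have hact : ∀ g : (Fin r → ℂ) ≃ₗ[ℂ] (Fin r → ℂ), g ∈ G → ∀ (x : Fin r → ℂ) (i : Fin r),
      eval (g x) (Q i) = eval x (Q i) := by
    intro g hg x i
    have h1 := congrArg (aeval (R := ℂ) (S₁ := ℂ) x) (hGinv g hg i)
    have h2 := MvPolynomial.comp_aeval
      (f := fun j : Fin r => ∑ k, C (g (Pi.single k 1) j) * X k)
      (aeval (R := ℂ) (S₁ := ℂ) x)
    have h3 : aeval x ((aeval fun j : Fin r => ∑ k, C (g (Pi.single k 1) j) * X k) (Q i))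
        = aeval (fun j => aeval x (∑ k, C (g (Pi.single k 1) j) * X k)) (Q i) := by
      rw [← AlgHom.comp_apply, h2]
    have h4 : (fun j => aeval x (∑ k, C (g (Pi.single k 1) j) * X k)) = g x := by
      funext j
      have h5 : g x = ∑ k, x k • g (Pi.single k 1) := by
        conv_lhs => rw [pi_eq_sum_univ x]
        rw [map_sum]
        refine Finset.sum_congr rfl fun k _ => ?_
        rw [map_smul]
        have hsingle : (fun j => if k = j then (1 : ℂ) else 0) = Pi.single k 1 := by
          funext j'
          rw [Pi.single_apply]
          simp [eq_comm]
        rw [hsingle]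
      rw [h5, map_sum, Finset.sum_apply]
      refine Finset.sum_congr rfl fun k _ => ?_
      rw [map_mul, aeval_X, aeval_C, Pi.smul_apply, smul_eq_mul, mul_comm]
      rfl
    rw [h3, h4] at h1
    rw [aux_aeval_eq_eval, aux_aeval_eq_eval] at h1
    exact h1
  have hGFmem : ∀ (g : G) (b : F),
      ((g : (Fin r → ℂ) ≃ₗ[ℂ] (Fin r → ℂ)) (b : Fin r → ℂ)) ∈ F := by
    intro g b
    intro i
    rw [hact (g : (Fin r → ℂ) ≃ₗ[ℂ] (Fin r → ℂ)) g.2 (b : Fin r → ℂ) i]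
    exact b.2 i
  -- partition the fiber into orbits
  set rel : F → F → Prop := fun b b' => ∃ g ∈ G,
    (g : (Fin r → ℂ) ≃ₗ[ℂ] (Fin r → ℂ)) (b : Fin r → ℂ) = (b' : Fin r → ℂ) with hrel
  have hequiv : Equivalence rel := by
    constructor
    · intro b
      exact ⟨1, G.one_mem, rfl⟩
    · rintro b b' ⟨g, hg, hgb⟩
      refine ⟨g⁻¹, G.inv_mem hg, ?_⟩
      rw [← hgb]
      exact g.symm_apply_apply _
    · rintro b b' b'' ⟨g, hg, hgb⟩ ⟨g', hg', hgb'⟩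
      refine ⟨g' * g, G.mul_mem hg' hg, ?_⟩
      show g' (g (b : Fin r → ℂ)) = (b'' : Fin r → ℂ)
      rw [hgb, hgb']
  letI St : Setoid F := ⟨rel, hequiv⟩
  haveI : Finite (Quotient St) := Quotient.finite _
  haveI : Fintype (Quotient St) := Fintype.ofFinite _
  have hfiber : ∀ qt : Quotient St,
      Fintype.card {b : F // Quotient.mk St b = qt} ≤ Nat.card G := by
    intro qt
    set b0 : F := qt.out with hb0
    have hmem : ∀ g : G, Quotient.mk St
        (⟨(g : (Fin r → ℂ) ≃ₗ[ℂ] (Fin r → ℂ)) (b0 : Fin r → ℂ), hGFmem g b0⟩ : F) = qt := by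
      intro g
      have hr : rel b0 ⟨(g : (Fin r → ℂ) ≃ₗ[ℂ] (Fin r → ℂ)) (b0 : Fin r → ℂ), hGFmem g b0⟩ :=
        ⟨(g : (Fin r → ℂ) ≃ₗ[ℂ] (Fin r → ℂ)), g.2, rfl⟩
      have := Quotient.sound (s := St) (hequiv.symm hr)
      rw [this]
      exact Quotient.out_eq qt
    set φ : G → {b : F // Quotient.mk St b = qt} := fun g =>
      ⟨⟨(g : (Fin r → ℂ) ≃ₗ[ℂ] (Fin r → ℂ)) (b0 : Fin r → ℂ), hGFmem g b0⟩, hmem g⟩ with hφ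
    have hsurj : Function.Surjective φ := by
      rintro ⟨b, hb⟩
      have hbb : Quotient.mk St b0 = Quotient.mk St b := by
        rw [Quotient.out_eq qt, hb]
      have hrel0 : rel b0 b := Quotient.exact hbb
      obtain ⟨g, hg, hgb⟩ := hrel0
      exact ⟨⟨g, hg⟩, Subtype.ext (Subtype.ext hgb)⟩
    have hcard := Nat.card_le_card_of_surjective φ hsurj
    rwa [Nat.card_eq_fintype_card] at hcard
  have hcardF : Fintype.card F ≤ Fintype.card (Quotient St) * Nat.card G := by
    have he := Fintype.card_congr (Equiv.sigmaFiberEquiv (fun b : F => Quotient.mk St b)).symm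
    rw [Fintype.card_sigma] at he
    calc Fintype.card F
        = ∑ qt : Quotient St, Fintype.card {b : F // Quotient.mk St b = qt} := he
      _ ≤ ∑ _qt : Quotient St, Nat.card G := Finset.sum_le_sum fun qt _ => hfiber qt
      _ = Fintype.card (Quotient St) * Nat.card G := by
          rw [Finset.sum_const, Finset.card_univ, smul_eq_mul]
  have hdle : d ≤ Fintype.card (Quotient St) := by
    have hg0 : 0 < Nat.card G := Nat.card_pos
    have h1 : Nat.card G * d ≤ Fintype.card (Quotient St) * Nat.card G := by
      rw [← hN]
      exact hNle.trans hcardF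
    rw [mul_comm] at h1
    exact Nat.le_of_mul_le_mul_right h1 hg0
  obtain ⟨e⟩ : Nonempty (Fin d ↪ Quotient St) :=
    Function.Embedding.nonempty_of_card_le (by simpa using hdle)
  refine ⟨fun i => (((e i).out : F) : Fin r → ℂ), fun i j => (e i).out.2 j, ?_⟩
  intro i j hij g hg hgij
  have hrel2 : rel (e i).out (e j).out := ⟨g, hg, hgij⟩
  have heq : e i = e j := by
    rw [← Quotient.out_eq (e i), ← Quotient.out_eq (e j)]
    exact Quotient.sound hrel2
  exact hij (e.injective heq)
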